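/- Let L and M be positive definite Hermitian matrices in M_2(O) and suppose P ∈ M_2(O) satisfies M P = ± P' L (either sign). Then det P is a rational integer and P* M P = |det P| · L. -/

import Mathlib

open scoped ComplexOrder
open Matrix

/-- The involution `P ↦ P'` on `M₂(K)`: `[[a,b],[c,d]] ↦ [[d̄,-c̄],[-b̄,ā]]`. -/
def pprime {K : Type*} [Field K] (σ : K → K) (P : Matrix (Fin 2) (Fin 2) K) :
    Matrix (Fin 2) (Fin 2) K :=
  !![σ (P 1 1), -(σ (P 1 0)); -(σ (P 0 1)), σ (P 0 0)]

/-- Conjugate transpose of a `2×2` matrix with respect to the conjugation `σ`. -/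
def cstar {K : Type*} [Field K] (σ : K → K) (P : Matrix (Fin 2) (Fin 2) K) :
    Matrix (Fin 2) (Fin 2) K :=
  !![σ (P 0 0), σ (P 1 0); σ (P 0 1), σ (P 1 1)]



lemma cstar_eq {K : Type*} [Field K] (f : K → K) (A : Matrix (Fin 2) (Fin 2) K) :
    cstar f A = (A.map f)ᵀ := by
  ext i j
  fin_cases i <;> fin_cases j <;> simp [cstar, Matrix.map_apply, Matrix.transpose_apply]

lemma pprime_eq {K : Type*} [Field K] (f : K →+* K) (A : Matrix (Fin 2) (Fin 2) K) :
    pprime (⇑f) A = ((A.adjugate).map (⇑f))ᵀ := by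
  ext i j
  fin_cases i <;> fin_cases j <;>
    simp [pprime, Matrix.adjugate_fin_two, Matrix.map_apply, Matrix.transpose_apply]

lemma fixed_is_rat {K : Type*} [Field K] [NumberField K]
    (hdeg : Module.finrank ℚ K = 2)
    (σ : K ≃ₐ[ℚ] K) (hσne : σ ≠ (AlgEquiv.refl : K ≃ₐ[ℚ] K))
    {x : K} (hx : σ x = x) : ∃ q : ℚ, algebraMap ℚ K q = x := by
  set S : Submodule ℚ K := LinearMap.ker (σ.toLinearMap - LinearMap.id) with hS
  have hmem : ∀ y : K, y ∈ S ↔ σ y = y := by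
    intro y
    simp [hS, LinearMap.mem_ker, sub_eq_zero]
  have hone : (1 : K) ∈ S := (hmem 1).mpr (map_one σ)
  have hspan : (ℚ ∙ (1 : K)) ≤ S := by
    rw [Submodule.span_singleton_le_iff_mem]; exact hone
  have hSne : S ≠ ⊤ := by
    intro hTop
    apply hσne
    ext y
    simpa using (hmem y).mp (hTop ▸ Submodule.mem_top)
  have hfin : Module.finrank ℚ S ≤ 1 := by
    by_contra hgt
    push_neg at hgt
    have hle : Module.finrank ℚ S ≤ 2 := hdeg ▸ Submodule.finrank_le S
    have : Module.finrank ℚ S = 2 := le_antisymm hle hgt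
    exact hSne (Submodule.eq_top_of_finrank_eq (this.trans hdeg.symm))
  have hspan1 : Module.finrank ℚ (ℚ ∙ (1 : K)) = 1 :=
    finrank_span_singleton one_ne_zero
  have heq : (ℚ ∙ (1 : K)) = S :=
    Submodule.eq_of_le_of_finrank_le hspan (hspan1 ▸ hfin)
  have : x ∈ (ℚ ∙ (1 : K)) := heq ▸ (hmem x).mpr hx
  obtain ⟨q, hq⟩ := Submodule.mem_span_singleton.mp this
  exact ⟨q, by simpa [Algebra.smul_def] using hq⟩

lemma key_alg {K : Type*} [Field K] (f : K →+* K) (hf : ∀ x, f (f x) = x)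
    (L M P : Matrix (Fin 2) (Fin 2) K)
    (hLh : cstar (⇑f) L = L) (hMh : cstar (⇑f) M = M)
    (s : K) (hfs : f s = s)
    (hMP : M * P = s • (pprime (⇑f) P * L)) :
    cstar (⇑f) P * M * P = (s * P.det) • L ∧
      (f (s * P.det)) • L = (s * P.det) • L := by
  have hmapmap : ∀ A : Matrix (Fin 2) (Fin 2) K, (A.map ⇑f).map ⇑f = A := by
    intro A; ext i j; simp [Matrix.map_apply, hf]
  have mapsmul : ∀ (c : K) (A : Matrix (Fin 2) (Fin 2) K),
      (c • A).map ⇑f = f c • A.map ⇑f := by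
    intro c A; ext i j; simp [Matrix.map_apply, _root_.map_mul]
  rw [cstar_eq] at hLh hMh ⊢
  rw [pprime_eq] at hMP
  have e0 := congrArg (fun A => (Matrix.map A ⇑f)ᵀ) hMP
  simp only [Matrix.map_mul, Matrix.transpose_mul, mapsmul, hfs, Matrix.transpose_smul,
    Matrix.transpose_map, Matrix.transpose_transpose, hmapmap, hLh, hMh] at e0
  -- e0 : (P.map f)ᵀ * M = s • (L * P.adjugate)
  have key : (P.map ⇑f)ᵀ * M * P = (s * P.det) • L := by
    calc (P.map ⇑f)ᵀ * M * P = (s • (L * P.adjugate)) * P := by rw [e0]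
      _ = s • (L * (P.adjugate * P)) := by rw [Matrix.smul_mul, mul_assoc]
      _ = s • (L * (P.det • 1)) := by rw [Matrix.adjugate_mul]
      _ = (s * P.det) • L := by
          rw [Matrix.mul_smul, mul_one, smul_smul]
  refine ⟨key, ?_⟩
  have herm : ((((P.map ⇑f)ᵀ * M * P).map ⇑f)ᵀ) = (P.map ⇑f)ᵀ * M * P := by
    simp only [Matrix.map_mul, Matrix.transpose_mul, Matrix.transpose_map,
      Matrix.transpose_transpose, hmapmap, hMh]
    rw [mul_assoc]
  have := congrArg (fun A => (Matrix.map A ⇑f)ᵀ) key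
  simp only [herm, mapsmul, Matrix.transpose_smul, hLh] at this
  rw [key] at this
  exact this.symm

/- STATEMENT 14.  Let `L, M` be positive definite Hermitian matrices in `M₂(O)` for `O`
an imaginary quadratic order, and suppose `P ∈ M₂(O)` satisfies `M P = ± P' L`.  Then
`det P` is a rational integer and `P* M P = |det P| · L`. -/
theorem stmt14 (K : Type*) [Field K] [NumberField K]
    (hdeg : Module.finrank ℚ K = 2) (himag : IsEmpty (K →+* ℝ))
    (σ : K ≃ₐ[ℚ] K) (hσ : ∀ x, σ (σ x) = x) (hσne : σ ≠ (AlgEquiv.refl : K ≃ₐ[ℚ] K))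
    (φ : K →+* ℂ) (hφσ : ∀ x, φ (σ x) = starRingEnd ℂ (φ x))
    (L M P : Matrix (Fin 2) (Fin 2) K)
    (hLint : ∀ i j, IsIntegral ℤ (L i j)) (hMint : ∀ i j, IsIntegral ℤ (M i j))
    (hPint : ∀ i j, IsIntegral ℤ (P i j))
    (hLherm : cstar (⇑σ) L = L) (hMherm : cstar (⇑σ) M = M)
    (hLpd : (L.map ⇑φ).PosDef) (hMpd : (M.map ⇑φ).PosDef)
    (h : M * P = pprime (⇑σ) P * L ∨ M * P = -(pprime (⇑σ) P * L)) :
    ∃ n : ℤ, P.det = (n : K) ∧ cstar (⇑σ) P * M * P = ((n.natAbs : K)) • L := by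
  classical
  set fr : K →+* K := σ.toAlgHom.toRingHom with hfrdef
  have hfr : (⇑σ : K → K) = ⇑fr := rfl
  obtain ⟨s, hscase, hMP⟩ : ∃ s : K, (s = 1 ∨ s = -1) ∧
      M * P = s • (pprime (⇑σ) P * L) := by
    rcases h with h | h
    · exact ⟨1, Or.inl rfl, by simpa using h⟩
    · exact ⟨-1, Or.inr rfl, by simpa using h⟩
  have hfs : fr s = s := by
    rcases hscase with rfl | rfl <;> simp
  rw [hfr] at hMP hLherm hMherm hφσ ⊢
  obtain ⟨key, hermL⟩ := key_alg fr hσ L M P hLherm hMherm s hfs hMP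
  set d : K := s * P.det with hd
  -- L 0 0 ≠ 0
  have hL00 : L 0 0 ≠ 0 := by
    have hx : (![1, 0] : Fin 2 → ℂ) ≠ 0 := by
      intro hc; have := congrFun hc 0; simp at this
    have hpos := hLpd.dotProduct_mulVec_pos (x := (![1, 0] : Fin 2 → ℂ)) hx
    have hval : star (![1, 0] : Fin 2 → ℂ) ⬝ᵥ (L.map ⇑φ) *ᵥ ![1, 0] = φ (L 0 0) := by
      simp [Matrix.mulVec, dotProduct, Fin.sum_univ_two, Matrix.map_apply]
    rw [hval] at hpos
    intro hc
    rw [hc, map_zero] at hpos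
    exact lt_irrefl _ hpos
  -- σ d = d
  have hfd : fr d = d := by
    have := congrFun (congrFun (congrArg (fun A => A) hermL) 0) 0
    have h00 : fr d * L 0 0 = d * L 0 0 := by
      simpa [Matrix.smul_apply, smul_eq_mul] using this
    exact mul_right_cancel₀ hL00 h00
  -- d is an integer
  have hdint : IsIntegral ℤ d := by
    have hdet : IsIntegral ℤ P.det := by
      rw [Matrix.det_fin_two]
      exact ((hPint 0 0).mul (hPint 1 1)).sub ((hPint 0 1).mul (hPint 1 0))
    have hsint : IsIntegral ℤ s := by
      rcases hscase with rfl | rfl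
      · exact isIntegral_one
      · exact isIntegral_one.neg
    exact hsint.mul hdet
  obtain ⟨q, hq⟩ := fixed_is_rat hdeg σ hσne (x := d) hfd
  have hqint : IsIntegral ℤ q := by
    have : IsIntegral ℤ (algebraMap ℚ K q) := hq ▸ hdint
    exact (isIntegral_algebraMap_iff (algebraMap ℚ K).injective).mp this
  obtain ⟨n, hn⟩ := IsIntegrallyClosed.isIntegral_iff.mp hqint
  have hdn : d = (n : K) := by
    rw [← hq, ← hn]
    simp [Rat.cast_intCast]
  -- positivity: 0 ≤ n
  have keyn : cstar (⇑fr) P * M * P = (n : K) • L := by rw [key, ← hdn]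
  have hmapφ : ((cstar (⇑fr) P).map ⇑φ) = (P.map ⇑φ)ᴴ := by
    rw [cstar_eq]
    ext i j
    simp [Matrix.map_apply, Matrix.conjTranspose_apply, hφσ]
  have hφkey : (P.map ⇑φ)ᴴ * (M.map ⇑φ) * (P.map ⇑φ) = (n : ℂ) • (L.map ⇑φ) := by
    have := congrArg (fun A => Matrix.map A ⇑φ) keyn
    simp only [Matrix.map_mul, hmapφ] at this
    rw [this]
    ext i j
    simp [Matrix.map_apply, Matrix.smul_apply, smul_eq_mul, _root_.map_mul]
  have hPS : ((n : ℂ) • (L.map ⇑φ)).PosSemidef := by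
    rw [← hφkey]
    exact hMpd.posSemidef.conjTranspose_mul_mul_same (P.map ⇑φ)
  have hn0 : 0 ≤ n := by
    set x : Fin 2 → ℂ := ![1, 0] with hxdef
    have hx : x ≠ 0 := by intro hc; have := congrFun hc 0; simp [hxdef] at this
    have h1 := hPS.dotProduct_mulVec_nonneg x
    have h2 := hLpd.dotProduct_mulVec_pos hx
    set c : ℂ := star x ⬝ᵥ (L.map ⇑φ) *ᵥ x with hc
    have hval : star x ⬝ᵥ ((n : ℂ) • (L.map ⇑φ)) *ᵥ x = (n : ℂ) * c := by
      rw [hc, Matrix.smul_mulVec, dotProduct_smul, smul_eq_mul]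
    rw [hval] at h1
    rw [Complex.le_def] at h1
    rw [Complex.lt_def] at h2
    have hre : (0 : ℝ) ≤ (n : ℝ) * c.re := by
      have := h1.1
      simpa [Complex.mul_re, ← h2.2] using this
    have hcre : (0 : ℝ) < c.re := by simpa using h2.1
    have : (0 : ℝ) ≤ (n : ℝ) := nonneg_of_mul_nonneg_right (by rwa [mul_comm] at hre) hcre
    exact_mod_cast this
  -- conclude
  have hss : s * s = 1 := by rcases hscase with rfl | rfl <;> ring
  have hdet : P.det = s * (n : K) := by
    have : s * d = P.det := by rw [hd, ← mul_assoc, hss, one_mul]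
    rw [← this, hdn]
  have hnat : ((n.natAbs : K)) = (n : K) := by
    rw [← Int.cast_natCast (R := K), Int.natAbs_of_nonneg hn0]
  rcases hscase with rfl | rfl
  · refine ⟨n, by simpa using hdet, ?_⟩
    rw [keyn, hnat]
  · refine ⟨-n, by simpa using hdet, ?_⟩
    rw [keyn]
    congr 1
    rw [Int.natAbs_neg, hnat]
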